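/- arXiv:1601.00728 — 3 statements merged into one kernel-verified Lean document; each statement's English description precedes it below -/
import Mathlib

section
/- If q : ℝ → ℝ satisfies x q''(x) - 2x sin(2q(x)) + q'(x) + 2 sin(q(x)) = 0 on an interval, and y(t) = ((e^{i q(t/4)} + 1)/(e^{i q(t/4)} - 1))^2 with e^{i q(t/4)} ≠ 1, then y satisfies the special Painlevé V equation y'' = (1/(2y) + 1/(y-1))(y')^2 - y'/t + y/t - y(y+1)/(2(y-1)). -/
set_option maxHeartbeats 2000000


open Complex Set

open Topology Filter


theorem alg_painleve (e u v T : ℂ) (he : e ≠ 0) (h1 : e - 1 ≠ 0) (hp : e + 1 ≠ 0)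
    (hT : T ≠ 0)
    (hODE : v * T * e ^ 2 = (e ^ 4 - 1) * T - 4 * (u * e ^ 2 + e ^ 3 - e)) :
    -v / 4 * e * (e + 1) / (e - 1) ^ 3
      + u ^ 2 / 4 * e * (e ^ 2 + 4 * e + 1) / (e - 1) ^ 4 =
    (1 / (2 * ((e + 1) / (e - 1)) ^ 2) + 1 / (((e + 1) / (e - 1)) ^ 2 - 1))
        * (-u * e * (e + 1) / (e - 1) ^ 3) ^ 2
      - -u * e * (e + 1) / (e - 1) ^ 3 / T
      + ((e + 1) / (e - 1)) ^ 2 / T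
      - ((e + 1) / (e - 1)) ^ 2 * (((e + 1) / (e - 1)) ^ 2 + 1)
          / (2 * (((e + 1) / (e - 1)) ^ 2 - 1)) := by
  rw [show ((e + 1) / (e - 1)) ^ 2 - 1 = 4 * e / (e - 1) ^ 2 by field_simp; ring]
  rw [show 1 / (2 * ((e + 1) / (e - 1)) ^ 2) + 1 / (4 * e / (e - 1) ^ 2)
        = (e - 1) ^ 2 * (e ^ 2 + 4 * e + 1) / (4 * (e * (e + 1) ^ 2)) by
      field_simp; ring]
  rw [show (-u * e * (e + 1) / (e - 1) ^ 3) ^ 2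
        = (u ^ 2 * (e ^ 2 * (e + 1) ^ 2)) / (e - 1) ^ 6 by
      rw [div_pow, show (-u * e * (e + 1)) ^ 2 = u ^ 2 * (e ^ 2 * (e + 1) ^ 2) by ring,
        show ((e - 1) ^ 3) ^ 2 = (e - 1) ^ 6 by rw [← pow_mul]]]
  rw [show ((e + 1) / (e - 1)) ^ 2 * (((e + 1) / (e - 1)) ^ 2 + 1) / (2 * (4 * e / (e - 1) ^ 2))
        = (e + 1) ^ 2 * ((e + 1) ^ 2 + (e - 1) ^ 2) / (8 * (e * (e - 1) ^ 2)) by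
      field_simp; ring]
  rw [div_pow]
  field_simp
  linear_combination (-8 : ℂ) * (e + 1) * (e - 1) * hODE

/-- If `q : ℝ → ℝ` satisfies `x q'' - 2x sin(2q) + q' + 2 sin q = 0` on an interval, and
`y t = ((e^{i q(t/4)} + 1)/(e^{i q(t/4)} - 1))^2` with `e^{i q(t/4)} ≠ 1`, then `y` satisfies
the special Painlevé V equation. -/
theorem stmt_0 (a b : ℝ) (q : ℝ → ℝ)
    (hq : ∀ x ∈ Ioo a b, DifferentiableAt ℝ q x)
    (hq' : ∀ x ∈ Ioo a b, DifferentiableAt ℝ (deriv q) x)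
    (heq : ∀ x ∈ Ioo a b,
      x * deriv (deriv q) x - 2 * x * Real.sin (2 * q x) + deriv q x + 2 * Real.sin (q x) = 0)
    (y : ℝ → ℂ)
    (hy : ∀ t : ℝ, y t =
      ((Complex.exp (Complex.I * (q (t / 4) : ℂ)) + 1) /
       (Complex.exp (Complex.I * (q (t / 4) : ℂ)) - 1)) ^ 2)
    (t : ℝ) (ht : t / 4 ∈ Ioo a b) (ht0 : t ≠ 0)
    (hne : Complex.exp (Complex.I * (q (t / 4) : ℂ)) ≠ 1)
    (hy0 : y t ≠ 0) (hy1 : y t ≠ 1) :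
    deriv (deriv y) t =
      (1 / (2 * y t) + 1 / (y t - 1)) * (deriv y t) ^ 2
        - deriv y t / (t : ℂ) + y t / (t : ℂ)
        - y t * (y t + 1) / (2 * (y t - 1)) := by
  set E : ℝ → ℂ := fun s => Complex.exp (Complex.I * (q (s / 4) : ℂ)) with hE_def
  -- derivative of E
  have hE : ∀ s : ℝ, s / 4 ∈ Ioo a b →
      HasDerivAt E (E s * (Complex.I * ((deriv q (s / 4) * (1 / 4) : ℝ) : ℂ))) s := by
    intro s hs
    have h4 : HasDerivAt (fun u : ℝ => u / 4) (1 / 4 : ℝ) s := (hasDerivAt_id s).div_const 4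
    have hqc : HasDerivAt (fun u : ℝ => ((q (u / 4) : ℝ) : ℂ))
        ((deriv q (s / 4) * (1 / 4) : ℝ) : ℂ) s :=
      (((hq _ hs).hasDerivAt.comp s h4)).ofReal_comp
    exact (hqc.const_mul Complex.I).cexp
  -- eventual membership
  have hopen : ∀ᶠ s in 𝓝 t, s / 4 ∈ Ioo a b := by
    have hc : ContinuousAt (fun s : ℝ => s / 4) t := (continuous_id.div_const 4).continuousAt
    exact hc.preimage_mem_nhds (isOpen_Ioo.mem_nhds ht)
  have hev2 : ∀ᶠ s in 𝓝 t, E s ≠ 1 := (hE t ht).continuousAt.eventually_ne hne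
  -- first derivative of y
  set Y1 : ℝ → ℂ := fun s =>
    -Complex.I * ((deriv q (s / 4) : ℝ) : ℂ) * E s * (E s + 1)
      / ((E s - 1) * (E s - 1) * (E s - 1)) with hY1_def
  have key : ∀ s : ℝ, s / 4 ∈ Ioo a b → E s ≠ 1 → HasDerivAt y (Y1 s) s := by
    intro s hs hnes
    have hyf : y = fun u => ((E u + 1) / (E u - 1)) * ((E u + 1) / (E u - 1)) := by
      funext u
      rw [hy u, hE_def]
      ring
    rw [hyf]
    have hden : E s - 1 ≠ 0 := sub_ne_zero.mpr hnes
    have hw := ((hE s hs).add_const 1).div ((hE s hs).sub_const 1) hden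
    have h : HasDerivAt (fun u => ((E u + 1) / (E u - 1)) * ((E u + 1) / (E u - 1))) _ s :=
      hw.mul hw
    convert h using 1
    simp only [hY1_def, Pi.div_apply]
    rw [show (E s - 1) * (E s - 1) * (E s - 1) = (E s - 1) ^ 3 from by ring]
    push_cast
    field_simp [hden]
    ring
  have hd1 : deriv y =ᶠ[𝓝 t] Y1 := by
    filter_upwards [hopen, hev2] with s hs1 hs2
    exact (key s hs1 hs2).deriv
  -- basic nonvanishing facts
  have hden : E t - 1 ≠ 0 := sub_ne_zero.mpr hne
  have he0 : E t ≠ 0 := Complex.exp_ne_zero _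
  have htc : (t : ℂ) ≠ 0 := Complex.ofReal_ne_zero.mpr ht0
  have hep : E t + 1 ≠ 0 := by
    intro h
    apply hy0
    rw [hy t]
    rw [show Complex.exp (Complex.I * (q (t / 4) : ℂ)) + 1 = 0 from h]
    norm_num
  -- second derivative of y
  have hd0' : (E t - 1) * (E t - 1) * (E t - 1) ≠ 0 := by
    exact mul_ne_zero (mul_ne_zero hden hden) hden
  have h4 : HasDerivAt (fun u : ℝ => u / 4) (1 / 4 : ℝ) t := (hasDerivAt_id t).div_const 4
  have hq1t : HasDerivAt (fun s : ℝ => ((deriv q (s / 4) : ℝ) : ℂ))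
      ((deriv (deriv q) (t / 4) * (1 / 4) : ℝ) : ℂ) t :=
    by have h := ((hq' _ ht).hasDerivAt.comp t h4); exact h.ofReal_comp
  have hY2t : deriv (deriv y) t =
      -(Complex.I * ((deriv (deriv q) (t / 4) : ℝ) : ℂ)) / 4 * E t * (E t + 1) / (E t - 1) ^ 3
        + (Complex.I * ((deriv q (t / 4) : ℝ) : ℂ)) ^ 2 / 4 * E t
            * (E t ^ 2 + 4 * E t + 1) / (E t - 1) ^ 4 := by
    have hN := ((hq1t.const_mul (-Complex.I)).mul (hE t ht)).mul ((hE t ht).add_const 1)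
    have hDen := ((((hE t ht).sub_const 1).mul ((hE t ht).sub_const 1)).mul
      ((hE t ht).sub_const 1))
    have hD := hN.div hDen hd0'
    have hD' : HasDerivAt Y1 _ t := hD
    have h5 := hD'.deriv
    rw [hd1.deriv_eq, h5]
    simp only [Pi.mul_apply, Pi.div_apply]
    rw [show (E t - 1) * (E t - 1) * (E t - 1) = (E t - 1) ^ 3 from by ring]
    push_cast
    field_simp [hden]
    ring
  have hY1t : deriv y t =
      -(Complex.I * ((deriv q (t / 4) : ℝ) : ℂ)) * E t * (E t + 1) / (E t - 1) ^ 3 := by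
    rw [(key t ht hne).deriv]
    simp only [hY1_def]
    rw [show (E t - 1) * (E t - 1) * (E t - 1) = (E t - 1) ^ 3 from by ring]
    push_cast
    ring
  -- the ODE, translated to an expression for I * q''
  have hODEc : ((t : ℝ) : ℂ) / 4 * ((deriv (deriv q) (t / 4) : ℝ) : ℂ)
      - 2 * (((t : ℝ) : ℂ) / 4) * ((Real.sin (2 * q (t / 4)) : ℝ) : ℂ)
      + ((deriv q (t / 4) : ℝ) : ℂ) + 2 * ((Real.sin (q (t / 4)) : ℝ) : ℂ) = 0 := by
    have h := heq _ ht
    exact_mod_cast congrArg (fun x : ℝ => (x : ℂ)) h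
  have hexp1 : Complex.exp (-(q (t / 4) : ℂ) * Complex.I)
      * Complex.exp (Complex.I * (q (t / 4) : ℂ)) = 1 := by
    rw [← Complex.exp_add,
      show -(q (t / 4) : ℂ) * Complex.I + Complex.I * (q (t / 4) : ℂ) = 0 by ring,
      Complex.exp_zero]
  have hexp2 : Complex.exp (-(2 * (q (t / 4) : ℂ)) * Complex.I)
      * (Complex.exp (Complex.I * (q (t / 4) : ℂ))
        * Complex.exp (Complex.I * (q (t / 4) : ℂ))) = 1 := by
    rw [← Complex.exp_add, ← Complex.exp_add,
      show -(2 * (q (t / 4) : ℂ)) * Complex.I + (Complex.I * (q (t / 4) : ℂ)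
        + Complex.I * (q (t / 4) : ℂ)) = 0 by ring,
      Complex.exp_zero]
  have hs1' : Complex.I * ((Real.sin (q (t / 4)) : ℝ) : ℂ)
        * Complex.exp (Complex.I * (q (t / 4) : ℂ))
      = (Complex.exp (Complex.I * (q (t / 4) : ℂ)) ^ 2 - 1) / 2 := by
    rw [Complex.ofReal_sin]
    simp only [Complex.sin]
    rw [show (q (t / 4) : ℂ) * Complex.I = Complex.I * (q (t / 4) : ℂ) by ring]
    linear_combination ((Complex.exp (-(q (t / 4) : ℂ) * Complex.I)
        - Complex.exp (Complex.I * (q (t / 4) : ℂ)))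
          * Complex.exp (Complex.I * (q (t / 4) : ℂ)) / 2) * Complex.I_mul_I
      - (1 / 2 : ℂ) * hexp1
  have hs2' : Complex.I * ((Real.sin (2 * q (t / 4)) : ℝ) : ℂ)
        * Complex.exp (Complex.I * (q (t / 4) : ℂ)) ^ 2
      = (Complex.exp (Complex.I * (q (t / 4) : ℂ)) ^ 4 - 1) / 2 := by
    rw [Complex.ofReal_sin]
    simp only [Complex.sin]
    push_cast
    rw [show 2 * (q (t / 4) : ℂ) * Complex.I
        = Complex.I * (q (t / 4) : ℂ) + Complex.I * (q (t / 4) : ℂ) by ring,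
      Complex.exp_add]
    linear_combination ((Complex.exp (-(2 * (q (t / 4) : ℂ)) * Complex.I)
        - Complex.exp (Complex.I * (q (t / 4) : ℂ))
          * Complex.exp (Complex.I * (q (t / 4) : ℂ)))
        * (Complex.exp (Complex.I * (q (t / 4) : ℂ))
          * Complex.exp (Complex.I * (q (t / 4) : ℂ))) / 2) * Complex.I_mul_I
      - (1 / 2 : ℂ) * hexp2
  have hkey : Complex.I * ((deriv (deriv q) (t / 4) : ℝ) : ℂ) * (t : ℂ)
        * Complex.exp (Complex.I * (q (t / 4) : ℂ)) ^ 2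
      = (Complex.exp (Complex.I * (q (t / 4) : ℂ)) ^ 4 - 1) * (t : ℂ)
        - 4 * (Complex.I * ((deriv q (t / 4) : ℝ) : ℂ)
            * Complex.exp (Complex.I * (q (t / 4) : ℂ)) ^ 2
          + Complex.exp (Complex.I * (q (t / 4) : ℂ)) ^ 3
          - Complex.exp (Complex.I * (q (t / 4) : ℂ))) := by
    linear_combination 4 * Complex.I * Complex.exp (Complex.I * (q (t / 4) : ℂ)) ^ 2 * hODEc
      + 2 * (t : ℂ) * hs2' - 8 * Complex.exp (Complex.I * (q (t / 4) : ℂ)) * hs1'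
  -- final algebra
  rw [hY2t, hY1t, hy t]
  simp only [hE_def]
  have hden' : Complex.exp (Complex.I * (q (t / 4) : ℂ)) - 1 ≠ 0 := sub_ne_zero.mpr hne
  have he0' : Complex.exp (Complex.I * (q (t / 4) : ℂ)) ≠ 0 := Complex.exp_ne_zero _
  have hep' : Complex.exp (Complex.I * (q (t / 4) : ℂ)) + 1 ≠ 0 := by
    simpa [hE_def] using hep
  exact alg_painleve _ _ _ _ he0' hden' hep' htc hkey
end

section
/- Suppose y, v : ℝ → ℂ are differentiable on an open interval with t ≠ 0, y ≠ 0, y ≠ 1, and satisfy the system t y' = t y - 2v(y-1)^2 and t v' = y v^2 - v^2/y. Then y satisfies the special Painlevé V equation y'' = (1/(2y) + 1/(y-1))(y')^2 - y'/t + y/t - y(y+1)/(2(y-1)). -/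
open Set

set_option maxHeartbeats 1000000 in
/-- If `y, v` satisfy the first two equations of the PV isomonodromy system on an interval,
then `y` satisfies the special Painlevé V equation. -/
theorem stmt_1 (a b : ℝ) (y v : ℝ → ℂ)
    (hy : ∀ t ∈ Ioo a b, DifferentiableAt ℝ y t)
    (hv : ∀ t ∈ Ioo a b, DifferentiableAt ℝ v t)
    (ht0 : ∀ t ∈ Ioo a b, t ≠ 0)
    (hy0 : ∀ t ∈ Ioo a b, y t ≠ 0)
    (hy1 : ∀ t ∈ Ioo a b, y t ≠ 1)
    (heq1 : ∀ t ∈ Ioo a b, (t : ℂ) * deriv y t = (t : ℂ) * y t - 2 * v t * (y t - 1) ^ 2)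
    (heq2 : ∀ t ∈ Ioo a b, (t : ℂ) * deriv v t = y t * (v t) ^ 2 - (v t) ^ 2 / y t)
    (t : ℝ) (ht : t ∈ Ioo a b) :
    deriv (deriv y) t =
      (1 / (2 * y t) + 1 / (y t - 1)) * (deriv y t) ^ 2
        - deriv y t / (t : ℂ) + y t / (t : ℂ)
        - y t * (y t + 1) / (2 * (y t - 1)) := by
  have hmem : Ioo a b ∈ nhds t := isOpen_Ioo.mem_nhds ht
  set g : ℝ → ℂ := fun s => ((s : ℂ) * y s - 2 * v s * (y s - 1) ^ 2) / (s : ℂ) with hg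
  have hEq : deriv y =ᶠ[nhds t] g := by
    filter_upwards [hmem] with s hs
    have hs0 : (s : ℂ) ≠ 0 := by exact_mod_cast ht0 s hs
    rw [hg]
    field_simp
    rw [mul_comm]
    exact heq1 s hs
  have hderiv : deriv (deriv y) t = deriv g t := hEq.deriv_eq
  have hct : HasDerivAt (fun s : ℝ => (s : ℂ)) 1 t := by
    have h := Complex.ofRealCLM.hasDerivAt (x := t); simp at h; exact h
  have hyt : HasDerivAt y (deriv y t) t := (hy t ht).hasDerivAt
  have hvt : HasDerivAt v (deriv v t) t := (hv t ht).hasDerivAt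
  have ht0' : (t : ℂ) ≠ 0 := by exact_mod_cast ht0 t ht
  have hy0' := hy0 t ht
  have hy1' : y t - 1 ≠ 0 := sub_ne_zero.mpr (hy1 t ht)
  have hsub := hyt.sub_const 1
  have hpow : HasDerivAt (fun s : ℝ => (y s - 1) ^ 2)
      (deriv y t * (y t - 1) + (y t - 1) * deriv y t) t := by
    have h := hsub.mul hsub; simp only [pow_two]; exact h
  have hnum := (hct.mul hyt).sub ((hvt.const_mul 2).mul hpow)
  have hgd := hnum.div hct ht0'
  rw [hderiv, (show HasDerivAt g (((1 * y t + (t : ℂ) * deriv y t - (2 * deriv v t * (y t - 1) ^ 2 + 2 * v t * (deriv y t * (y t - 1) + (y t - 1) * deriv y t))) * (t : ℂ) - ((t : ℂ) * y t - 2 * v t * (y t - 1) ^ 2) * 1) / (t : ℂ) ^ 2) t from hgd).deriv]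
  have hY : deriv y t = ((t : ℂ) * y t - 2 * v t * (y t - 1) ^ 2) / (t : ℂ) :=
    (eq_div_iff ht0').mpr (by linear_combination heq1 t ht)
  have hV : deriv v t = (v t) ^ 2 * ((y t) ^ 2 - 1) / ((t : ℂ) * y t) :=
    (eq_div_iff (mul_ne_zero ht0' hy0')).mpr (by linear_combination y t * heq2 t ht - v t ^ 2 * mul_inv_cancel₀ hy0')
  rw [hY, hV]
  have hD : (2 : ℂ) * y t * (y t - 1) * (t : ℂ) ^ 2 * ((t : ℂ) * (t : ℂ)) ≠ 0 :=
    mul_ne_zero (mul_ne_zero (mul_ne_zero (mul_ne_zero two_ne_zero hy0') hy1')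
      (pow_ne_zero 2 ht0')) (mul_ne_zero ht0' ht0')
  field_simp
  ring
end

section
/- Suppose y, v : ℝ → ℂ satisfy the system t y' = t y - 2v(y-1)^2 and t v' = y v^2 - v^2/y on an interval where t ≠ 0, y ≠ 0. Then the quantity α² := 4(v²(1-y)²/y - v t) satisfies d/dt (α²) = -4v, i.e. d/dt (v²(1-y)²/y - vt) = -v. -/
open Set

/-- Along solutions of the PV isomonodromy system, the quantity
`v²(1-y)²/y - v t` (which equals `α(t)²/4`) satisfies `d/dt (v²(1-y)²/y - vt) = -v`. -/
theorem stmt_2 (a b : ℝ) (y v : ℝ → ℂ)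
    (hy : ∀ t ∈ Ioo a b, DifferentiableAt ℝ y t)
    (hv : ∀ t ∈ Ioo a b, DifferentiableAt ℝ v t)
    (ht0 : ∀ t ∈ Ioo a b, t ≠ 0)
    (hy0 : ∀ t ∈ Ioo a b, y t ≠ 0)
    (heq1 : ∀ t ∈ Ioo a b, (t : ℂ) * deriv y t = (t : ℂ) * y t - 2 * v t * (y t - 1) ^ 2)
    (heq2 : ∀ t ∈ Ioo a b, (t : ℂ) * deriv v t = y t * (v t) ^ 2 - (v t) ^ 2 / y t)
    (t : ℝ) (ht : t ∈ Ioo a b) :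
    deriv (fun τ : ℝ => (v τ) ^ 2 * (1 - y τ) ^ 2 / y τ - v τ * (τ : ℂ)) t = - v t := by
  have hy' : HasDerivAt y (deriv y t) t := (hy t ht).hasDerivAt
  have hv' : HasDerivAt v (deriv v t) t := (hv t ht).hasDerivAt
  have hycoe : HasDerivAt (fun τ : ℝ => (τ : ℂ)) 1 t := by
    simpa using (hasDerivAt_id t).ofReal_comp
  have ha : HasDerivAt (fun τ : ℝ => (v τ) ^ 2) (2 * v t ^ 1 * deriv v t) t := by
    simp only [pow_two, pow_one]
    exact (hv'.mul hv').congr_deriv (by ring)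
  have hb : HasDerivAt (fun τ : ℝ => (1 - y τ) ^ 2)
      (2 * (1 - y t) ^ 1 * (0 - deriv y t)) t := by
    simp only [pow_two, pow_one]
    exact (((hasDerivAt_const t (1:ℂ)).sub hy').mul ((hasDerivAt_const t (1:ℂ)).sub hy')).congr_deriv
      (by simp only [Pi.sub_apply]; ring)
  have h1 := ((ha.mul hb).div hy' (hy0 t ht)).sub (hv'.mul hycoe)
  rw [show deriv (fun τ : ℝ => (v τ) ^ 2 * (1 - y τ) ^ 2 / y τ - v τ * (τ : ℂ)) t = _ from h1.deriv]
  have htc : (t : ℂ) ≠ 0 := Complex.ofReal_ne_zero.mpr (ht0 t ht)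
  have hyc : y t ≠ 0 := hy0 t ht
  have hY : deriv y t = ((t : ℂ) * y t - 2 * v t * (y t - 1) ^ 2) / t := by
    rw [eq_div_iff htc]; linear_combination heq1 t ht
  have hV : deriv v t = (y t * (v t) ^ 2 - (v t) ^ 2 / y t) / t := by
    rw [eq_div_iff htc]; linear_combination heq2 t ht
  rw [hY, hV]
  simp only [Pi.mul_apply]
  field_simp [htc, hyc]
  ring_nf
end
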